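/- Let n ≥ 3 and let F(x₀,…,xₙ) = x₀³ + x₀·x₁² + x₁·(Σᵢ₌₂ⁿ xᵢ²) ∈ ℂ[x₀,…,xₙ]. Then every point p ∈ ℙⁿ(ℂ) with homogeneous coordinates satisfying x₀ = x₁ = 0 lies in V_F, i.e. rk 𝓗_F(p) ≤ 2; in particular V_F contains the (n−2)-dimensional linear subspace {x₀ = x₁ = 0} of ℙⁿ(ℂ). -/

import Mathlib

open MvPolynomial

noncomputable section

/-- The Hessian matrix of a multivariate polynomial `F`, evaluated at the point `x`. -/
def hess {m : ℕ} {R : Type*} [CommSemiring R] (F : MvPolynomial (Fin m) R)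
    (x : Fin m → R) : Matrix (Fin m) (Fin m) R :=
  Matrix.of fun i j => eval x (pderiv i (pderiv j F))

/-- A polynomial is non-degenerate if the determinant of its Hessian is not
identically zero. -/
def nondeg {m : ℕ} {R : Type*} [CommRing R] (F : MvPolynomial (Fin m) R) : Prop :=
  ∃ x, (hess F x).det ≠ 0

/-- The substitution action of a matrix on a polynomial: `(T · F)(x) = F (T.mulVec x)`. -/
def matAct {m : ℕ} {R : Type*} [CommSemiring R] (T : Matrix (Fin m) (Fin m) R)
    (F : MvPolynomial (Fin m) R) : MvPolynomial (Fin m) R :=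
  bind₁ (fun i => ∑ j, C (T i j) * X j) F

/-- The projective hypersurface `{F = 0}` is smooth: the only common zero of the
partial derivatives of `F` is the origin. -/
def smoothHyp {m : ℕ} (F : MvPolynomial (Fin m) ℂ) : Prop :=
  ∀ x : Fin m → ℂ, (∀ i, eval x (pderiv i F) = 0) → x = 0

/-- The polynomial `a·x₀³ + x₀²·(∑ᵢ bᵢ xᵢ) + G(x₁, …, xₙ)`. -/
def redPoly {m : ℕ} {R : Type*} [CommSemiring R] (a : R) (B : Fin m → R)
    (G : MvPolynomial (Fin m) R) : MvPolynomial (Fin (m + 1)) R :=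
  C a * X 0 ^ 3 + X 0 ^ 2 * (∑ i, C (B i) * X i.succ) + rename Fin.succ G

/-- `(a, B, G)` is a reduced triple associated to `F`: `G` is a non-degenerate
cubic form and some `T ∈ SL(n+1, ℤ)` puts `F` in the reduced form `(a, B, G)`. -/
def IsReducedTriple {n : ℕ} (F : MvPolynomial (Fin (n + 1)) ℤ)
    (a : ℤ) (B : Fin n → ℤ) (G : MvPolynomial (Fin n) ℤ) : Prop :=
  G.IsHomogeneous 3 ∧ nondeg G ∧
    ∃ T : Matrix (Fin (n + 1)) (Fin (n + 1)) ℤ, T.det = 1 ∧ matAct T F = redPoly a B G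

/-- Equivalence of reduced triples over ℤ: `a = a'` and some `M ∈ SL(n, ℤ)`
carries `(B, G)` to `(B', G')`. -/
def TripleEquiv {n : ℕ} (a : ℤ) (B : Fin n → ℤ) (G : MvPolynomial (Fin n) ℤ)
    (a' : ℤ) (B' : Fin n → ℤ) (G' : MvPolynomial (Fin n) ℤ) : Prop :=
  a = a' ∧ ∃ M : Matrix (Fin n) (Fin n) ℤ, M.det = 1 ∧ B' = M.mulVec B ∧ G' = matAct M G

open Matrix Module in
theorem aux_rank_stmt16 {m : Type*} [Fintype m] [DecidableEq m] (u v w z : m → ℂ) :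
    (Matrix.vecMulVec u v + Matrix.vecMulVec w z).rank ≤ 2 := by
  classical
  have hsub : LinearMap.range (Matrix.vecMulVec u v + Matrix.vecMulVec w z).mulVecLin ≤
      Submodule.span ℂ {u, w} := by
    rintro _ ⟨y, rfl⟩
    have hy : (Matrix.vecMulVec u v + Matrix.vecMulVec w z).mulVecLin y
        = (v ⬝ᵥ y) • u + (z ⬝ᵥ y) • w := by
      funext i
      simp [Matrix.mulVecLin_apply, Matrix.mulVec, Matrix.vecMulVec_apply, dotProduct,
        Finset.mul_sum, mul_assoc, mul_comm, mul_left_comm, Finset.sum_add_distrib]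
    rw [hy]
    exact Submodule.add_mem _
      (Submodule.smul_mem _ _ (Submodule.subset_span (by simp)))
      (Submodule.smul_mem _ _ (Submodule.subset_span (by simp)))
  have h1 : (Matrix.vecMulVec u v + Matrix.vecMulVec w z).rank
      ≤ finrank ℂ (Submodule.span ℂ ({u, w} : Set (m → ℂ))) :=
    Submodule.finrank_mono hsub
  refine h1.trans ?_
  refine (finrank_span_le_card _).trans ?_
  have hss : ({u, w} : Set (m → ℂ)).toFinset ⊆ {u, w} := by
    intro a ha
    simp at ha ⊢
    tauto
  calc ({u, w} : Set (m → ℂ)).toFinset.card ≤ ({u, w} : Finset (m → ℂ)).card :=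
        Finset.card_le_card hss
    _ ≤ 2 := Finset.card_insert_le _ _ |>.trans (by simp)

/-- Remark 3.7. For `n ≥ 3` and
`F = x₀³ + x₀x₁² + x₁·(x₂² + ⋯ + xₙ²)`, every point of `ℙⁿ(ℂ)` with homogeneous
coordinates satisfying `x₀ = x₁ = 0` lies in `V_F`, i.e. the Hessian of `F` has
rank at most 2 there; so `V_F` contains the `(n−2)`-dimensional linear subspace
`{x₀ = x₁ = 0}`. -/
theorem stmt16 {n : ℕ} (hn : 3 ≤ n) (F : MvPolynomial (Fin (n + 1)) ℂ)
    (hF : F = X 0 ^ 3 + X 0 * X 1 ^ 2 +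
      X 1 * ∑ i ∈ Finset.univ.filter (fun i : Fin (n + 1) => 2 ≤ i.val), X i ^ 2) :
    ∀ x : Fin (n + 1) → ℂ, x 0 = 0 → x 1 = 0 → (hess F x).rank ≤ 2 := by
  intro x h0 h1
  have heq : hess F x = Matrix.vecMulVec (Pi.single 1 1) (fun j => 2 * x j)
      + Matrix.vecMulVec (fun j => 2 * x j) (Pi.single 1 1) := by
    ext i j
    simp only [hess, hF, Matrix.of_apply, map_add, map_mul, map_pow, pderiv_X,
      Derivation.leibniz, Derivation.leibniz_pow, map_sum, Pi.single_apply,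
      Matrix.add_apply, Matrix.vecMulVec_apply, smul_eq_mul, mul_ite, ite_mul,
      mul_one, mul_zero, one_mul, zero_mul, map_zero, map_one, map_ofNat,
      apply_ite (pderiv i), apply_ite (eval x), eval_X, map_nsmul, nsmul_eq_mul,
      Nat.cast_ofNat, map_natCast, Finset.sum_ite_eq', Finset.mem_filter,
      Finset.mem_univ, true_and, add_zero, zero_add, h0, h1, pow_one]
    norm_num
    have e1 : ((1 : Fin (n + 1)) : ℕ) = 1 := by
      rw [Fin.val_one']; exact Nat.mod_eq_of_lt (by omega)
    have key : ∀ k : Fin (n + 1), (k : ℕ) < 2 → x k = 0 := by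
      intro k hk
      interval_cases h : (k : ℕ)
      · rw [show k = 0 from Fin.ext h]; exact h0
      · rw [show k = 1 from Fin.ext (by rw [h, e1])]; exact h1
    have c1 : ∀ k : Fin (n + 1), (1 = k) ↔ ((k : ℕ) = 1) := fun k => by
      rw [Fin.ext_iff, e1, eq_comm]
    have c2 : ∀ k : Fin (n + 1), (k = 1) ↔ ((k : ℕ) = 1) := fun k => by
      rw [Fin.ext_iff, e1]
    simp only [c1, c2]
    split_ifs <;>
      first
        | ring1
        | (exfalso; omega)
        | (rw [key i (by omega)]; ring1)
        | (rw [key j (by omega)]; ring1)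
        | (rw [key i (by omega), key j (by omega)]; ring1)
  rw [heq]
  exact aux_rank_stmt16 _ _ _ _
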